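/- Let r, c, l be positive integers. Let B̃ ∈ {0,1}^{r × cr} and define the r × cr matrix B over the natural numbers by B_{i,j} = i if B̃_{i,j} = 1 and B_{i,j} = cr + r + 1 − j if B̃_{i,j} = 0. Let σ(B) be the sequence obtained by concatenating the columns of B (each column read top to bottom, columns in order). Then: (a) if some row of B̃ contains at least m ones, then σ(B) contains a non-decreasing subsequence of length at least m; (b) if in every row of B̃ any two ones in columns j < j' satisfy j' − j ≥ l + 1, then every non-decreasing subsequence of σ(B) has length at most 2r + cr/l. -/

import Mathlib

open List

/-- Column concatenation `σ(B)` of an `r × t` matrix `B`: column `1` read top to bottom,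
then column `2`, and so on. -/
def sigmaB (r t : ℕ) (B : Fin r → Fin t → ℕ) : List ℕ :=
  (List.ofFn fun j : Fin t => List.ofFn fun i : Fin r => B i j).flatten

lemma stmt13_auxlen (r t : ℕ) (g : ℕ → ℕ → ℕ) :
    ((List.ofFn fun j : Fin t => List.ofFn fun i : Fin r => g j i).flatten).length = t * r := by
  simp [List.length_flatten, Function.comp, List.sum_ofFn, mul_comm]

lemma stmt13_auxget (r : ℕ) : ∀ (t : ℕ) (g : ℕ → ℕ → ℕ) (p : ℕ), p < t * r →
    ((List.ofFn fun j : Fin t => List.ofFn fun i : Fin r => g j i).flatten)[p]?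
      = some (g (p / r) (p % r)) := by
  intro t
  induction t with
  | zero => intro g p hp; omega
  | succ t ih =>
    intro g p hp
    rcases Nat.eq_zero_or_pos r with hr | hr
    · subst hr; omega
    have hsm : (t+1) * r = t * r + r := by ring
    rw [List.ofFn_succ, List.flatten_cons, List.getElem?_append]
    by_cases h : p < r
    · simp [h, Nat.div_eq_of_lt h, Nat.mod_eq_of_lt h, List.getElem?_ofFn]
    · push_neg at h
      simp only [List.length_ofFn, if_neg (by omega : ¬ p < r)]
      have h1 : p - r < t * r := by omega
      have := ih (fun j i => g (j+1) i) (p - r) h1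
      simp only [Fin.val_succ]
      rw [this]
      have hd : p / r = (p - r) / r + 1 := by
        conv_lhs => rw [show p = (p - r) + r by omega]
        rw [Nat.add_div_right _ hr]
      have hm : (p - r) % r = p % r := by
        conv_rhs => rw [show p = (p - r) + 1 * r by omega]
        rw [Nat.add_mul_mod_self_right]
      rw [hm, hd]

lemma stmt13_chain'_rep (m a : ℕ) : List.Chain' (· ≤ ·) (List.replicate m a) := by
  induction m with
  | zero => exact List.isChain_nil
  | succ m ih =>
    rw [List.replicate_succ]
    exact List.isChain_cons.mpr ⟨fun b hb => by
      rcases m with _ | m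
      · simp at hb
      · rw [List.replicate_succ, List.head?_cons] at hb
        cases hb; exact le_rfl, ih⟩

/-- Let `B̃ ∈ {0,1}^{r × cr}` and define `B` by `B_{i,j} = i` if
`B̃_{i,j} = 1` and `B_{i,j} = cr + r + 1 − j` if `B̃_{i,j} = 0` (with `1`-based indices).
(a) If some row of `B̃` contains at least `m` ones, then `σ(B)` contains a
non-decreasing subsequence of length at least `m`.
(b) If in every row of `B̃` any two ones in columns `j < j'` satisfy `j' − j ≥ l + 1`,
then every non-decreasing subsequence of `σ(B)` has length at most `2r + cr/l`. -/
theorem stmt13 (r c l : ℕ) (hr : 0 < r) (hc : 0 < c) (hl : 0 < l)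
    (Bt : Fin r → Fin (c * r) → Bool)
    (B : Fin r → Fin (c * r) → ℕ)
    (hB : ∀ i j, B i j = if Bt i j then i.val + 1 else c * r + r - j.val) :
    (∀ m : ℕ, (∃ i : Fin r,
        m ≤ (Finset.univ.filter fun j : Fin (c * r) => Bt i j = true).card) →
      ∃ w : List ℕ, w <+ sigmaB r (c * r) B ∧ w.Chain' (· ≤ ·) ∧ m ≤ w.length) ∧
    ((∀ (i : Fin r) (j j' : Fin (c * r)),
        j < j' → Bt i j = true → Bt i j' = true → l + 1 ≤ j'.val - j.val) →
      ∀ w : List ℕ, w <+ sigmaB r (c * r) B → w.Chain' (· ≤ ·) →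
        (w.length : ℝ) ≤ 2 * (r : ℝ) + (c : ℝ) * (r : ℝ) / (l : ℝ)) := by
  constructor
  · -- part (a)
    intro m ⟨i, hm⟩
    refine ⟨List.replicate m (i.val + 1), ?_, stmt13_chain'_rep _ _, by simp⟩
    rw [List.replicate_sublist_iff]
    refine hm.trans ?_
    rw [sigmaB, List.count_flatten, List.map_ofFn, List.sum_ofFn]
    calc (Finset.univ.filter fun j : Fin (c * r) => Bt i j = true).card
        = ∑ j ∈ (Finset.univ.filter fun j : Fin (c * r) => Bt i j = true), 1 := by
          rw [Finset.card_eq_sum_ones]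
      _ ≤ ∑ j ∈ (Finset.univ.filter fun j : Fin (c * r) => Bt i j = true),
            (List.ofFn fun i' : Fin r => B i' j).count (i.val + 1) := by
          refine Finset.sum_le_sum fun j hj => ?_
          rw [Finset.mem_filter] at hj
          have hmem : (i.val + 1) ∈ List.ofFn fun i' : Fin r => B i' j := by
            rw [List.mem_ofFn]
            exact ⟨i, by beta_reduce; rw [hB, if_pos hj.2]⟩
          exact List.count_pos_iff.mpr hmem
      _ ≤ ∑ j : Fin (c * r), (List.ofFn fun i' : Fin r => B i' j).count (i.val + 1) := by
          exact Finset.sum_le_sum_of_subset (Finset.filter_subset _ _)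
      _ = _ := by simp [Function.comp]
  · -- part (b)
    set g : ℕ → ℕ → ℕ := fun j i => if h : i < r ∧ j < c * r then B ⟨i, h.1⟩ ⟨j, h.2⟩ else 0
      with hg
    have hsig : sigmaB r (c*r) B
        = (List.ofFn fun j : Fin (c*r) => List.ofFn fun i : Fin r => g j i).flatten := by
      unfold sigmaB
      apply congrArg List.flatten
      apply congrArg List.ofFn
      funext j
      apply congrArg List.ofFn
      funext i
      simp only [hg, dif_pos (And.intro i.isLt j.isLt), Fin.eta]
    have hLen : (sigmaB r (c*r) B).length = c*r*r := by rw [hsig]; exact stmt13_auxlen ..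
    have hGet : ∀ p, p < c*r*r → (sigmaB r (c*r) B)[p]? = some (g (p/r) (p%r)) := by
      intro p hp; rw [hsig]; exact stmt13_auxget r (c*r) g p hp
    intro hgap w hsub hchain
    obtain ⟨f, hf⟩ := List.sublist_iff_exists_fin_orderEmbedding_get_eq.mp hsub
    set P : ℕ → ℕ := fun k => if hk : k < w.length then ((f ⟨k, hk⟩ : Fin _) : ℕ) else 0 with hP
    set V : ℕ → ℕ := fun k => w.getD k 0 with hV
    have hVget : ∀ k (hk : k < w.length), V k = w[k] := fun k hk => List.getD_eq_getElem w 0 hk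
    have hPlt : ∀ k, k < w.length → P k < c*r*r := by
      intro k hk
      simp only [hP, dif_pos hk]
      exact Nat.lt_of_lt_of_eq (f ⟨k, hk⟩).isLt hLen
    have hPmono : ∀ k k', k < k' → k' < w.length → P k < P k' := by
      intro k k' hkk hk'
      have hk : k < w.length := hkk.trans hk'
      simp only [hP, dif_pos hk, dif_pos hk']
      exact f.strictMono (show (⟨k, hk⟩ : Fin w.length) < ⟨k', hk'⟩ from hkk)
    have hVval : ∀ k, k < w.length → V k = g (P k / r) (P k % r) := by
      intro k hk
      have h1 : V k = (sigmaB r (c*r) B).get (f ⟨k, hk⟩) := by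
        rw [hVget k hk, ← hf ⟨k, hk⟩]; rfl
      have h2 := hGet (P k) (hPlt k hk)
      simp only [hP, dif_pos hk] at h2
      rw [List.getElem?_eq_getElem (f ⟨k, hk⟩).isLt] at h2
      simp only [hP, dif_pos hk]
      rw [List.get_eq_getElem] at h1
      rw [h1]
      exact Option.some.inj h2
    have hVmono : ∀ k k', k ≤ k' → k' < w.length → V k ≤ V k' := by
      intro k k' hkk hk'
      rcases eq_or_lt_of_le hkk with rfl | h
      · exact le_rfl
      have hpw := List.isChain_iff_pairwise.mp hchain
      rw [List.pairwise_iff_getElem] at hpw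
      have := hpw k k' (h.trans hk') hk' h
      rwa [hVget k (h.trans hk'), hVget k' hk']
    have hdich : ∀ k, k < w.length →
        (1 ≤ V k ∧ P k % r < r ∧ P k / r < c*r) ∧
        (V k ≤ r → V k = P k % r + 1 ∧
          ∃ (hi : P k % r < r) (hj : P k / r < c*r), Bt ⟨P k % r, hi⟩ ⟨P k / r, hj⟩ = true) ∧
        (r < V k → V k = c*r + r - P k / r) := by
      intro k hk
      have hi : P k % r < r := Nat.mod_lt _ hr
      have hj : P k / r < c*r := (Nat.div_lt_iff_lt_mul hr).mpr (hPlt k hk)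
      have hv := hVval k hk
      rw [hg] at hv
      simp only [dif_pos (And.intro hi hj)] at hv
      rw [hB] at hv
      by_cases hb : Bt ⟨P k % r, hi⟩ ⟨P k / r, hj⟩
      · rw [if_pos hb] at hv
        simp only [Fin.val_mk] at hv
        refine ⟨⟨by omega, hi, hj⟩, fun _ => ⟨by omega, hi, hj, hb⟩, fun hcon => ?_⟩
        omega
      · rw [if_neg hb] at hv
        simp only [Fin.val_mk] at hv
        refine ⟨⟨by omega, hi, hj⟩, fun hcon => absurd hcon (by omega), fun _ => by omega⟩
    have claimA : ∀ k, k + 1 < w.length → V (k+1) ≤ r →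
        l * V k + P k / r + l ≤ l * V (k+1) + P (k+1) / r := by
      intro k hk1 hsm
      have hk : k < w.length := by omega
      have hmono := hVmono k (k+1) (by omega) hk1
      have hsmk : V k ≤ r := hmono.trans hsm
      obtain ⟨-, hs1, -⟩ := hdich k hk
      obtain ⟨-, hs2, -⟩ := hdich (k+1) hk1
      obtain ⟨hvk, hik, hjk, hbk⟩ := hs1 hsmk
      obtain ⟨hvk1, hik1, hjk1, hbk1⟩ := hs2 hsm
      have hcol : P k / r ≤ P (k+1) / r :=
        Nat.div_le_div_right (le_of_lt (hPmono k (k+1) (by omega) hk1))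
      have hnn1 : 0 ≤ P k / r := Nat.zero_le _
      have hnn2 : 0 ≤ P (k+1) / r := Nat.zero_le _
      rcases eq_or_lt_of_le hmono with heq | hlt
      · have hrow : P k % r = P (k+1) % r := by omega
        have hne : P k / r ≠ P (k+1) / r := by
          intro hcc
          have hpe : P k = P (k+1) := by
            conv_lhs => rw [← Nat.div_add_mod (P k) r, hcc, hrow]
            exact Nat.div_add_mod (P (k+1)) r
          have := hPmono k (k+1) (by omega) hk1
          omega
        have hb2 : Bt ⟨P k % r, hik⟩ ⟨P (k+1) / r, hjk1⟩ = true := by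
          rw [show (⟨P k % r, hik⟩ : Fin r) = ⟨P (k+1) % r, hik1⟩ from Fin.ext hrow]
          exact hbk1
        have hgapk := hgap ⟨P k % r, hik⟩ ⟨P k / r, hjk⟩ ⟨P (k+1) / r, hjk1⟩
          (Fin.mk_lt_mk.mpr (lt_of_le_of_ne hcol hne)) hbk hb2
        simp only [Fin.val_mk] at hgapk
        rw [heq]
        omega
      · have h2 : l * V k + l ≤ l * V (k+1) := by
          have h3 : l * (V k + 1) ≤ l * V (k+1) := Nat.mul_le_mul_left l hlt
          rw [Nat.mul_add, Nat.mul_one] at h3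
          exact h3
        omega
    have claimB : ∀ d k, k + d < w.length → V (k + d) ≤ r →
        l * V k + P k / r + l * d ≤ l * V (k+d) + P (k+d) / r := by
      intro d
      induction d with
      | zero => intro k hk hsm; simp
      | succ d ih =>
        intro k hk hsm
        have hkd : k + (d + 1) = k + d + 1 := rfl
        rw [hkd] at hk hsm ⊢
        have hsm' : V (k+d) ≤ r := (hVmono (k+d) (k+d+1) (by omega) hk).trans hsm
        have hA := claimA (k+d) hk hsm
        have hB' := ih k (by omega) hsm'
        have he : l * (d+1) = l * d + l := by ring
        have hnn1 : 0 ≤ P k / r := Nat.zero_le _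
        have hnn2 : 0 ≤ P (k+d) / r := Nat.zero_le _
        have hnn3 : 0 ≤ P (k+d+1) / r := Nat.zero_le _
        omega
    have chainBound : ∀ n', n' < w.length → V n' ≤ r → l * (n' + 1) ≤ l * r + c * r := by
      intro n' hn' hvn
      have hB0 := claimB n' 0 (by omega) (by rw [Nat.zero_add]; exact hvn)
      simp only [Nat.zero_add] at hB0
      obtain ⟨⟨hv0, -, -⟩, -, -⟩ := hdich 0 (by omega)
      obtain ⟨⟨-, -, hjn⟩, -, -⟩ := hdich n' hn'
      have hm1 : l * 1 ≤ l * V 0 := Nat.mul_le_mul_left l hv0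
      have hm2 : l * V n' ≤ l * r := Nat.mul_le_mul_left l hvn
      rw [Nat.mul_one] at hm1
      have he : l * (n' + 1) = l * n' + l := by ring
      have hnn1 : 0 ≤ P 0 / r := Nat.zero_le _
      have hnn2 : 0 ≤ P n' / r := Nat.zero_le _
      omega
    have key : l * w.length ≤ 2 * (l * r) + c * r := by
      by_cases hall : ∀ k, k < w.length → V k ≤ r
      · rcases Nat.eq_zero_or_pos w.length with h0 | h0
        · rw [h0]; omega
        obtain ⟨n', hn'⟩ : ∃ n', w.length = n' + 1 := ⟨w.length - 1, by omega⟩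
        have := chainBound n' (by omega) (hall n' (by omega))
        rw [hn']
        omega
      · push_neg at hall
        have hex : ∃ k, k < w.length ∧ r < V k := by
          obtain ⟨k, hk1, hk2⟩ := hall
          exact ⟨k, hk1, by omega⟩
        set k0 := Nat.find hex with hk0def
        obtain ⟨hk0lt, hk0big⟩ := Nat.find_spec hex
        have hk0min : ∀ k, k < k0 → V k ≤ r := by
          intro k hkk0
          have := Nat.find_min hex hkk0
          push_neg at this
          rcases Nat.lt_or_ge k w.length with h | h
          · exact this h
          · omega
        have bound1 : l * k0 ≤ l * r + c * r := by
          rcases Nat.eq_zero_or_pos k0 with h0 | h0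
          · rw [h0]; omega
          obtain ⟨k', hk'⟩ : ∃ k', k0 = k' + 1 := ⟨k0 - 1, by omega⟩
          have := chainBound k' (by omega) (hk0min k' (by omega))
          rw [hk']
          omega
        have hconst : ∀ k, k0 ≤ k → k < w.length → P k / r = P k0 / r := by
          intro k hk0k hk
          have h1 : r < V k := lt_of_lt_of_le hk0big (hVmono k0 k hk0k hk)
          obtain ⟨⟨-, -, hjk⟩, -, hbig⟩ := hdich k hk
          obtain ⟨⟨-, -, hjk0⟩, -, hbig0⟩ := hdich k0 hk0lt
          have e1 := hbig h1
          have e2 := hbig0 hk0big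
          have hvm := hVmono k0 k hk0k hk
          have hcm : P k0 / r ≤ P k / r := by
            rcases eq_or_lt_of_le hk0k with rfl | h
            · exact le_rfl
            · exact Nat.div_le_div_right (le_of_lt (hPmono k0 k h hk))
          have hnn1 : 0 ≤ P k / r := Nat.zero_le _
          have hnn2 : 0 ≤ P k0 / r := Nat.zero_le _
          omega
        have bound2 : w.length - k0 ≤ r := by
          have hmaps : ∀ k ∈ Finset.Ico k0 w.length,
              P k ∈ Finset.Ico (r * (P k0 / r)) (r * (P k0 / r) + r) := by
            intro k hk
            rw [Finset.mem_Ico] at hk ⊢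
            have e := Nat.div_add_mod (P k) r
            rw [hconst k hk.1 hk.2] at e
            have hm : P k % r < r := Nat.mod_lt _ hr
            have hnn1 : 0 ≤ r * (P k0 / r) := Nat.zero_le _
            have hnn2 : 0 ≤ P k % r := Nat.zero_le _
            omega
          have hinj : Set.InjOn (fun k => P k) (Finset.Ico k0 w.length) := by
            intro a ha b hb hab
            simp only [Finset.coe_Ico, Set.mem_Ico] at ha hb
            have hab' : P a = P b := hab
            by_contra hne
            rcases Nat.lt_or_ge a b with h | h
            · have := hPmono a b h hb.2; omega
            · have hba : b < a := by omega
              have := hPmono b a hba ha.2; omega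
          have hcard := Finset.card_le_card_of_injOn (fun k => P k) hmaps hinj
          rw [Nat.card_Ico, Nat.card_Ico] at hcard
          omega
        have hfin : w.length ≤ k0 + r := by omega
        have hmul : l * w.length ≤ l * (k0 + r) := Nat.mul_le_mul_left l hfin
        have he : l * (k0 + r) = l * k0 + l * r := by ring
        omega
    have hlR : (0:ℝ) < l := by exact_mod_cast hl
    have keyR : (l:ℝ) * w.length ≤ 2*((l:ℝ)*r) + (c:ℝ)*r := by exact_mod_cast key
    rw [show (2:ℝ)*(r:ℝ) + (c:ℝ)*(r:ℝ)/(l:ℝ) = (2*((l:ℝ)*r) + (c:ℝ)*r)/(l:ℝ) by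
      field_simp]
    rw [le_div_iff₀ hlR]
    linarith [keyR]
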